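/- For every β ∈ (0,1] and every p ∈ [0,1], the quantity G^{type2}(p) := β^{−1/3} · (1 + (1−p)β) · (2^{2βp/(1+β(1−p))} / (1+β)²)^{1/3} satisfies G^{type2}(p) ≥ 1. -/
import Mathlib


open Real

set_option maxHeartbeats 1000000 in
/-- The sharing gain for the smaller operator,
`G^{type2}(p) = β^{−1/3} (1+(1−p)β) (2^{2βp/(1+β(1−p))}/(1+β)²)^{1/3}`,
is at least `1` for every `β ∈ (0,1]` and `p ∈ [0,1]`. -/
theorem gain_type2_ge_one
    (β p : ℝ) (hβ0 : 0 < β) (hβ1 : β ≤ 1) (hp0 : 0 ≤ p) (hp1 : p ≤ 1) :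
    1 ≤ β ^ (-(1 : ℝ) / 3) * (1 + (1 - p) * β) *
      ((2 : ℝ) ^ (2 * β * p / (1 + β * (1 - p))) / (1 + β) ^ 2) ^ ((1 : ℝ) / 3) := by
  set s : ℝ := 1 + β * (1 - p) with hs_def
  have hs1 : 1 ≤ s := by nlinarith
  have hsp : (0 : ℝ) < s := by linarith
  have hs2 : s ≤ 1 + β := by nlinarith
  have hid : β * p = 1 + β - s := by simp [hs_def]; ring
  have hβ1p : (0:ℝ) < 1 + β := by linarith
  have h2e : (0:ℝ) < (2 : ℝ) ^ (2 * β * p / s) := rpow_pos_of_pos (by norm_num) _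
  have hX : (0:ℝ) < (2 : ℝ) ^ (2 * β * p / s) / (1 + β) ^ 2 := by positivity
  have hpos1 : (0:ℝ) < 1 + (1 - p) * β := by nlinarith
  have hA : (0:ℝ) < β ^ (-(1 : ℝ) / 3) * (1 + (1 - p) * β) *
      ((2 : ℝ) ^ (2 * β * p / s) / (1 + β) ^ 2) ^ ((1 : ℝ) / 3) :=
    mul_pos (mul_pos (rpow_pos_of_pos hβ0 _) hpos1) (rpow_pos_of_pos hX _)
  -- reduce to log inequality
  have hlog : 0 ≤ Real.log (β ^ (-(1 : ℝ) / 3) * (1 + (1 - p) * β) *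
      ((2 : ℝ) ^ (2 * β * p / s) / (1 + β) ^ 2) ^ ((1 : ℝ) / 3)) := by
    have h1p : 1 + (1 - p) * β = s := by rw [hs_def]; ring
    rw [Real.log_mul (ne_of_gt (mul_pos (rpow_pos_of_pos hβ0 _) hpos1))
          (ne_of_gt (rpow_pos_of_pos hX _)),
        Real.log_mul (ne_of_gt (rpow_pos_of_pos hβ0 _)) (ne_of_gt hpos1),
        Real.log_rpow hβ0, Real.log_rpow hX, Real.log_div (ne_of_gt h2e) (by positivity),
        Real.log_rpow (by norm_num : (0:ℝ) < 2), Real.log_pow, h1p]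
    -- key log bounds
    set L : ℝ := Real.log 2 with hL_def
    have hLlt : L < 0.6931471808 := Real.log_two_lt_d9
    have hLgt : (0.6931471803 : ℝ) < L := Real.log_two_gt_d9
    have h1 : Real.log β ≤ β - 1 := Real.log_le_sub_one_of_pos hβ0
    have h2 : Real.log (1 + β) ≤ L + (β - 1) / 2 := by
      have := Real.log_le_sub_one_of_pos (show (0:ℝ) < (1 + β) / 2 by linarith)
      rw [Real.log_div (by linarith) (by norm_num)] at this
      linarith
    have h3 : 1 - s⁻¹ ≤ Real.log s := by
      have := Real.log_le_sub_one_of_pos (show (0:ℝ) < s⁻¹ by positivity)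
      rw [Real.log_inv] at this
      have hss : s * s⁻¹ = 1 := mul_inv_cancel₀ (ne_of_gt hsp)
      nlinarith
    set t : ℝ := s⁻¹ with ht_def
    have htp : (0:ℝ) < t := by positivity
    have hst : s * t = 1 := mul_inv_cancel₀ (ne_of_gt hsp)
    -- the purely algebraic core inequality (after multiplying by s)
    have key : 0 ≤ 5 * s - 3 - 2 * β * s + 2 * L * (1 + β - 2 * s) := by
      nlinarith [mul_nonneg (by linarith : (0:ℝ) ≤ 1 - β) (by nlinarith : (0:ℝ) ≤ s - L),
        mul_nonneg (by linarith : (0:ℝ) ≤ s - 1) (by linarith : (0:ℝ) ≤ 3 - 4 * L)]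
    have key' : 0 ≤ 5 - 2 * β - 3 * t + 2 * (1 + β) * t * L - 4 * L := by
      have h0 := mul_nonneg key htp.le
      nlinarith [h0, hst]
    have hdiv : 2 * β * p / s = (2 * (1 + β) - 2 * s) * t := by
      rw [ht_def, ← div_eq_mul_inv]
      congr 1
      linarith
    have hstL : s * t * L = L := by rw [hst, one_mul]
    rw [hdiv]
    clear_value s t L
    linarith [key', h1, h2, h3, hstL]
  calc (1:ℝ) = Real.exp 0 := Real.exp_zero.symm
    _ ≤ Real.exp (Real.log (β ^ (-(1 : ℝ) / 3) * (1 + (1 - p) * β) *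
      ((2 : ℝ) ^ (2 * β * p / s) / (1 + β) ^ 2) ^ ((1 : ℝ) / 3))) := Real.exp_le_exp.mpr hlog
    _ = _ := Real.exp_log hA
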